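/- Extension lemma: let C = C(a_i,b_i) be a standard complex of length 2n and f : C ⇝ A a short map into a reduced almost ι-complex A (i.e., f is a U-equivariant grading-preserving chain map satisfying ωf(T_i) + f(ωT_i) ≡ 0 mod U for 0 ≤ i ≤ 2n−1, with no ω-condition on T_{2n}). Then there exists a standard complex C' extending C (its parameter sequence has (a_i,b_i) as a prefix) and an almost ι-morphism f' : C' → A agreeing with f on T_0,…,T_{2n}. If f(T_0) represents a U-nontorsion homology class, then f' is local. -/

import Mathlib

open Polynomial

abbrev F2 : Type := ZMod 2
abbrev R : Type := Polynomial F2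

noncomputable section

namespace AI

/-- The variable `U`. -/
def Uu : R := Polynomial.X

/-- The free `R`-module of rank `n`. -/
abbrev V (n : ℕ) : Type := Fin n → R

/-- The `i`-th standard basis vector. -/
def e {n : ℕ} (i : Fin n) : V n := fun j => if j = i then 1 else 0

/-- The `i`-th standard basis vector over `F2`. -/
def e2 {n : ℕ} (i : Fin n) : Fin n → F2 := fun j => if j = i then 1 else 0

/-- `x` lies in the image of multiplication by `U`. -/
def modU {n : ℕ} (x : V n) : Prop := ∀ j, (x j).coeff 0 = 0

/-- `x` is homogeneous of degree `c` with respect to the generator gradings `gr`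
(where `deg U = -2`). -/
def IsHomog {n : ℕ} (gr : Fin n → ℤ) (c : ℤ) (x : V n) : Prop :=
  ∀ (j : Fin n) (m : ℕ), (x j).coeff m ≠ 0 → gr j - 2 * (m : ℤ) = c

/-- `f` is a graded `R`-linear map of degree `dg`. -/
def GradedMap {m n : ℕ} (gr₁ : Fin m → ℤ) (gr₂ : Fin n → ℤ) (dg : ℤ)
    (f : V m →ₗ[R] V n) : Prop :=
  ∀ i : Fin m, IsHomog gr₂ (gr₁ i + dg) (f (e i))

/-- The raw data of a free finitely generated `ℤ`-graded complex over `R = F[U]`. -/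
structure PreCplx where
  n : ℕ
  gr : Fin n → ℤ
  d : V n →ₗ[R] V n

def IsCycle (C : PreCplx) (x : V C.n) : Prop := C.d x = 0

def IsBdry (C : PreCplx) (x : V C.n) : Prop := ∃ y, C.d y = x

/-- `x` is a cycle representing a `U`-nontorsion homology class. -/
def NontorsionClass (C : PreCplx) (x : V C.n) : Prop :=
  IsCycle C x ∧ ∀ k : ℕ, ¬ IsBdry C ((Uu ^ k) • x)

/-- `U⁻¹H_*(C) ≅ F[U, U⁻¹]`, generated by a degree-zero cycle (normalization
convention: the maximal degree of a `U`-nontorsion cycle class is zero, so the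
localized homology is supported in even degrees). -/
def HtowerCond (C : PreCplx) : Prop :=
  ∃ x : V C.n, IsCycle C x ∧ IsHomog C.gr 0 x ∧
    (∀ k : ℕ, ¬ IsBdry C ((Uu ^ k) • x)) ∧
    (∀ y : V C.n, IsCycle C y →
      ∃ (k : ℕ) (p : R) (z : V C.n), (Uu ^ k) • y = p • x + C.d z)

/-- `C` is a genuine graded chain complex. -/
def IsCplx (C : PreCplx) : Prop :=
  GradedMap C.gr C.gr (-1) C.d ∧ C.d ∘ₗ C.d = 0

/-- `f` and `g` are homotopic mod `U`. -/
def HomotopicModU (C₁ C₂ : PreCplx) (f g : V C₁.n →ₗ[R] V C₂.n) : Prop :=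
  ∃ H : V C₁.n →ₗ[R] V C₂.n, GradedMap C₁.gr C₂.gr 1 H ∧
    ∀ x, modU ((f + g + H ∘ₗ C₁.d + C₂.d ∘ₗ H) x)

/-- The raw data of an almost ι-complex. -/
structure PreAI extends PreCplx where
  ι : V n →ₗ[R] V n

/-- `ω = 1 + ι`. -/
def omega (C : PreAI) : V C.n →ₗ[R] V C.n := LinearMap.id + C.ι

/-- `C` is an almost ι-complex. -/
def IsAICplx (C : PreAI) : Prop :=
  IsCplx C.toPreCplx ∧
  GradedMap C.gr C.gr 0 C.ι ∧
  (∀ x, modU ((C.ι ∘ₗ C.d + C.d ∘ₗ C.ι) x)) ∧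
  HomotopicModU C.toPreCplx C.toPreCplx (C.ι ∘ₗ C.ι) LinearMap.id ∧
  HtowerCond C.toPreCplx

/-- `C` is a genuine ι-complex: `ι` is an honest chain map whose square is
genuinely chain homotopic to the identity. -/
def IsIotaCplx (C : PreAI) : Prop :=
  IsCplx C.toPreCplx ∧
  GradedMap C.gr C.gr 0 C.ι ∧
  C.ι ∘ₗ C.d = C.d ∘ₗ C.ι ∧
  (∃ H : V C.n →ₗ[R] V C.n, GradedMap C.gr C.gr 1 H ∧
    C.ι ∘ₗ C.ι + LinearMap.id = H ∘ₗ C.d + C.d ∘ₗ H) ∧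
  HtowerCond C.toPreCplx

/-- A reduced complex: the differential vanishes mod `U`. -/
def Reduced (C : PreAI) : Prop := ∀ x, modU (C.d x)

/-- `f` is an almost ι-morphism. -/
def isAIMorphism (C₁ C₂ : PreAI) (f : V C₁.n →ₗ[R] V C₂.n) : Prop :=
  GradedMap C₁.gr C₂.gr 0 f ∧
  f ∘ₗ C₁.d = C₂.d ∘ₗ f ∧
  HomotopicModU C₁.toPreCplx C₂.toPreCplx (f ∘ₗ C₁.ι) (C₂.ι ∘ₗ f)

/-- A local map: an almost ι-morphism inducing an isomorphism on `U`-localized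
homology (equivalently, with the normalization conventions in force, preserving
`U`-nontorsion cycle classes). -/
def isLocalMap (C₁ C₂ : PreAI) (f : V C₁.n →ₗ[R] V C₂.n) : Prop :=
  isAIMorphism C₁ C₂ f ∧
  ∀ x, NontorsionClass C₁.toPreCplx x → NontorsionClass C₂.toPreCplx (f x)

/-- Local equivalence of almost ι-complexes. -/
def LocallyEquiv (C₁ C₂ : PreAI) : Prop :=
  (∃ f, isLocalMap C₁ C₂ f) ∧ (∃ g, isLocalMap C₂ C₁ g)

/-- The tensor product (over `R`) of linear maps between free modules,
in the bases indexed by `finProdFinEquiv`. -/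
def tmap {m n m' n' : ℕ} (f : V m →ₗ[R] V m') (g : V n →ₗ[R] V n') :
    V (m * n) →ₗ[R] V (m' * n') where
  toFun x := fun p => ∑ q : Fin (m * n),
    x q * f (e (finProdFinEquiv.symm q).1) (finProdFinEquiv.symm p).1
        * g (e (finProdFinEquiv.symm q).2) (finProdFinEquiv.symm p).2
  map_add' x y := by
    funext p
    simp [Pi.add_apply, add_mul, Finset.sum_add_distrib]
  map_smul' c x := by
    funext p
    simp only [RingHom.id_apply, Pi.smul_apply, smul_eq_mul, Finset.mul_sum]
    exact Finset.sum_congr rfl fun q _ => by ring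

/-- The tensor product of complexes. -/
def tensorPre (C₁ C₂ : PreCplx) : PreCplx where
  n := C₁.n * C₂.n
  gr := fun q => C₁.gr (finProdFinEquiv.symm q).1 + C₂.gr (finProdFinEquiv.symm q).2
  d := tmap C₁.d LinearMap.id + tmap LinearMap.id C₂.d

/-- The tensor product of almost ι-complexes. -/
def tensorAI (C₁ C₂ : PreAI) : PreAI where
  toPreCplx := tensorPre C₁.toPreCplx C₂.toPreCplx
  ι := tmap C₁.ι C₂.ι

/-- The transpose of a square matrix map (the dual map in the dual basis). -/
def tr {n : ℕ} (f : V n →ₗ[R] V n) : V n →ₗ[R] V n where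
  toFun x := fun j => ∑ i : Fin n, x i * f (e j) i
  map_add' x y := by
    funext j
    simp [Pi.add_apply, add_mul, Finset.sum_add_distrib]
  map_smul' c x := by
    funext j
    simp only [RingHom.id_apply, Pi.smul_apply, smul_eq_mul, Finset.mul_sum]
    exact Finset.sum_congr rfl fun i _ => by ring

/-- The dual complex. -/
def dualPre (C : PreCplx) : PreCplx where
  n := C.n
  gr := fun i => -C.gr i
  d := tr C.d

/-- The dual almost ι-complex. -/
def dualAI (C : PreAI) : PreAI where
  toPreCplx := dualPre C.toPreCplx
  ι := tr C.ι

/-- The trivial complex `C(0) = (F[U], ∂ = 0, ι = id)`. -/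
def cZero : PreAI := ⟨⟨1, fun _ => 0, 0⟩, LinearMap.id⟩

/-- The contraction map `C ⊗ C^∨ → F[U]`, `x ⊗ y ↦ y(x)`. -/
def contr (n : ℕ) : V (n * n) →ₗ[R] V 1 where
  toFun x := fun _ => ∑ i : Fin n, x (finProdFinEquiv (i, i))
  map_add' x y := by funext j; simp [Pi.add_apply, Finset.sum_add_distrib]
  map_smul' c x := by
    funext j
    simp only [RingHom.id_apply, Pi.smul_apply, smul_eq_mul, Finset.mul_sum]

/-! ### Standard and augmented complexes -/

/-- The `i`-th symbol (0-indexed) of the parameter sequence, padded by zeros. -/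
def seqAt (M : List ℤ) (i : ℕ) : ℤ := M.getD i 0

/-- Grading step of a `b`-arrow. -/
def bstep (b : ℤ) : ℤ := (if 0 < b then 1 else -1) - 2 * b

/-- Grading of the generator `T_i` of the standard/augmented complex. -/
def stdGr (M : List ℤ) (i : ℕ) : ℤ :=
  ∑ s ∈ Finset.range i, if s % 2 = 1 then bstep (seqAt M s) else 0

/-- A linear endomorphism of `V n` given by a matrix of coefficients. -/
def ofMatrix {n : ℕ} (c : ℕ → ℕ → R) : V n →ₗ[R] V n where
  toFun x := fun j => ∑ i : Fin n, x i * c i j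
  map_add' x y := by
    funext j
    simp [Pi.add_apply, add_mul, Finset.sum_add_distrib]
  map_smul' r x := by
    funext j
    simp only [RingHom.id_apply, Pi.smul_apply, smul_eq_mul, Finset.mul_sum]
    exact Finset.sum_congr rfl fun i _ => by ring

/-- Matrix of the differential of the standard/augmented complex: the `b`-symbol
at (0-indexed) odd position `s` of `M` relates `T_s` and `T_{s+1}`. -/
def dCoef (M : List ℤ) (i j : ℕ) : R :=
  if i % 2 = 1 ∧ seqAt M i < 0 ∧ j = i + 1 then Uu ^ (seqAt M i).natAbs
  else if i % 2 = 0 ∧ 0 < i ∧ 0 < seqAt M (i - 1) ∧ j + 1 = i then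
    Uu ^ (seqAt M (i - 1)).natAbs
  else 0

/-- Matrix of `ω = 1 + ι` on the standard/augmented complex: the `a`-symbol at
(0-indexed) even position `s` of `M` relates `T_s` and `T_{s+1}`. -/
def wCoef (M : List ℤ) (i j : ℕ) : R :=
  if i % 2 = 0 ∧ seqAt M i = -1 ∧ j = i + 1 then 1
  else if i % 2 = 1 ∧ seqAt M (i - 1) = 1 ∧ j + 1 = i then 1
  else 0

/-- Matrix of `ι = 1 + ω` (char 2). -/
def iCoef (M : List ℤ) (i j : ℕ) : R :=
  (if i = j then 1 else 0) + wCoef M i j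

/-- The standard (even length) or augmented (odd length) complex on generators
`T_0, …, T_{M.length}` determined by the symbol sequence `M`. -/
def symCplx (M : List ℤ) : PreAI :=
  ⟨⟨M.length + 1, fun i => stdGr M i, ofMatrix (dCoef M)⟩, ofMatrix (iCoef M)⟩

/-- Validity of a standard parameter sequence. -/
def StdParams (M : List ℤ) : Prop :=
  M.length % 2 = 0 ∧
  ∀ i < M.length, if i % 2 = 0 then seqAt M i = 1 ∨ seqAt M i = -1 else seqAt M i ≠ 0

/-- Validity of an augmented parameter sequence. -/
def AugParams (M : List ℤ) : Prop :=
  M.length % 2 = 1 ∧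
  ∀ i < M.length, if i % 2 = 0 then seqAt M i = 1 ∨ seqAt M i = -1 else seqAt M i ≠ 0

/-- The modified order `<!` on `ℤ`: `−1 <! −2 <! ⋯ <! 0 <! ⋯ <! 2 <! 1`. -/
def ltB (x y : ℤ) : Prop :=
  (x < 0 ∧ 0 ≤ y) ∨ (x ≤ 0 ∧ 0 < y) ∨ (x < 0 ∧ y < 0 ∧ y < x) ∨ (0 < x ∧ 0 < y ∧ y < x)

def leB (x y : ℤ) : Prop := ltB x y ∨ x = y

/-- Strict lexicographic order on (zero-padded) parameter sequences. -/
def lexLt (M M' : List ℤ) : Prop :=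
  ∃ k : ℕ, (∀ i < k, seqAt M i = seqAt M' i) ∧ ltB (seqAt M k) (seqAt M' k)

def lexLe (M M' : List ℤ) : Prop := lexLt M M' ∨ ∀ i, seqAt M i = seqAt M' i

/-- A short map from the standard (even `M.length`) or augmented (odd `M.length`)
complex determined by `M` to `A`: the `ω`-condition (standard case) resp. the
`∂`-condition (augmented case) is waived on the final generator. -/
def isShortMap (M : List ℤ) (A : PreAI) (f : V (M.length + 1) →ₗ[R] V A.n) : Prop :=
  GradedMap (symCplx M).gr A.gr 0 f ∧
  (∀ i : Fin (M.length + 1), ((i : ℕ) < M.length ∨ M.length % 2 = 0) →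
    A.d (f (e i)) = f ((symCplx M).d (e i))) ∧
  (∀ i : Fin (M.length + 1), ((i : ℕ) < M.length ∨ M.length % 2 = 1) →
    modU ((omega A) (f (e i)) + f ((omega (symCplx M)) (e i))))

/-- A local short map: `T_0` goes to a `U`-nontorsion cycle class. -/
def isLocalShortMap (M : List ℤ) (A : PreAI) (f : V (M.length + 1) →ₗ[R] V A.n) : Prop :=
  isShortMap M A f ∧ NontorsionClass A.toPreCplx (f (e ⟨0, Nat.succ_pos _⟩))

/-- The sequence of invariants `s_i(A)` (1-indexed in the paper; 0-indexed here):
`s k` is the `≤!`-maximum of the `(k+1)`-st symbols among standard complexes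
locally mapping to `A` whose first `k` symbols are `s 0, …, s (k-1)`. -/
def IsInvariantSeq (A : PreAI) (s : ℕ → ℤ) : Prop :=
  ∀ k : ℕ,
    (∃ M : List ℤ, StdParams M ∧ (∃ f, isLocalMap (symCplx M) A f) ∧
      ∀ i ≤ k, seqAt M i = s i) ∧
    (∀ M : List ℤ, StdParams M → (∃ f, isLocalMap (symCplx M) A f) →
      (∀ i < k, seqAt M i = s i) → leB (seqAt M k) (s k))

/-- Reduction mod `U` of a linear map, as an `F₂`-linear map. -/
def mapHat {m n : ℕ} (f : V m →ₗ[R] V n) : (Fin m → F2) →ₗ[F2] (Fin n → F2) where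
  toFun x := fun j => ∑ i : Fin m, x i * (f (e i) j).coeff 0
  map_add' x y := by
    funext j
    simp [Pi.add_apply, add_mul, Finset.sum_add_distrib]
  map_smul' c x := by
    funext j
    simp only [RingHom.id_apply, Pi.smul_apply, smul_eq_mul, Finset.mul_sum]
    exact Finset.sum_congr rfl fun i _ => by ring

/-- The induced action `ω̂` on `C/U`. -/
def wHat (C : PreAI) : (Fin C.n → F2) →ₗ[F2] (Fin C.n → F2) := mapHat (omega C)

end AI

namespace AI
/-! ### Basic lemmas -/

lemma F2_add_self (a : F2) : a + a = 0 := by revert a; decide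

lemma R_add_self (p : R) : p + p = 0 := by
  ext m; simp [Polynomial.coeff_add, F2_add_self]

lemma V_add_self {n : ℕ} (v : V n) : v + v = 0 := by
  funext j; exact R_add_self (v j)

lemma Uu_pow_ne_zero (k : ℕ) : Uu ^ k ≠ 0 :=
  pow_ne_zero _ Polynomial.X_ne_zero

lemma e_self {n : ℕ} (i : Fin n) : e i i = 1 := by simp [e]

lemma e_ne {n : ℕ} {i j : Fin n} (h : j ≠ i) : e i j = 0 := by simp [e, h]

lemma base_expand {n : ℕ} (u : V n) : u = ∑ i, u i • e i := by
  funext j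
  rw [Finset.sum_apply]
  simp only [Pi.smul_apply, e, smul_eq_mul, mul_ite, mul_one, mul_zero]
  rw [Finset.sum_ite_eq]
  simp

lemma apply_eq_sum {m n : ℕ} (f : V m →ₗ[R] V n) (u : V m) :
    f u = ∑ i, u i • f (e i) := by
  conv_lhs => rw [base_expand u]
  rw [map_sum]
  simp only [map_smul]

lemma lext {m n : ℕ} {f g : V m →ₗ[R] V n} (h : ∀ i, f (e i) = g (e i)) : f = g := by
  refine LinearMap.ext fun u => ?_
  rw [apply_eq_sum f, apply_eq_sum g]
  exact Finset.sum_congr rfl fun i _ => by rw [h i]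

/-- Build a linear map from values on the basis. -/
def mk {m n : ℕ} (g : Fin m → V n) : V m →ₗ[R] V n where
  toFun x := fun j => ∑ i, x i * g i j
  map_add' x y := by
    funext j
    simp [Pi.add_apply, add_mul, Finset.sum_add_distrib]
  map_smul' c x := by
    funext j
    simp only [RingHom.id_apply, Pi.smul_apply, smul_eq_mul, Finset.mul_sum]
    exact Finset.sum_congr rfl fun i _ => by ring

lemma mk_e {m n : ℕ} (g : Fin m → V n) (i : Fin m) : mk g (e i) = g i := by
  funext j
  show (∑ i', e i i' * g i' j) = g i j
  simp only [e, ite_mul, one_mul, zero_mul]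
  rw [Finset.sum_ite_eq']
  simp

lemma ofMatrix_e {n : ℕ} (c : ℕ → ℕ → R) (i : Fin n) (j : Fin n) :
    ofMatrix c (e i) j = c i j := by
  show (∑ i' : Fin n, e i i' * c i' j) = c i j
  simp only [e, ite_mul, one_mul, zero_mul]
  rw [Finset.sum_ite_eq']
  simp

lemma Usmul_eq_zero {n : ℕ} {w : V n} (h : Uu • w = 0) : w = 0 := by
  funext j
  have : Uu * w j = 0 := congrFun h j
  rcases mul_eq_zero.1 this with h' | h'
  · exact absurd h' Polynomial.X_ne_zero
  · exact h'

/-! ### modU lemmas -/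

lemma modU_zero {n : ℕ} : modU (0 : V n) := fun j => by simp

lemma modU_add {n : ℕ} {x y : V n} (hx : modU x) (hy : modU y) : modU (x + y) := by
  intro j; simp [Polynomial.coeff_add, hx j, hy j]

lemma modU_smul {n : ℕ} (p : R) {x : V n} (hx : modU x) : modU (p • x) := by
  intro j
  show ((p * x j).coeff 0) = 0
  rw [Polynomial.mul_coeff_zero, hx j, mul_zero]

lemma modU_sum {n : ℕ} {ι : Type*} (s : Finset ι) (F : ι → V n)
    (h : ∀ i ∈ s, modU (F i)) : modU (∑ i ∈ s, F i) := by
  intro j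
  rw [Finset.sum_apply, Polynomial.finset_sum_coeff]
  exact Finset.sum_eq_zero fun i hi => h i hi j

lemma modU_map {m n : ℕ} (f : V m →ₗ[R] V n) {x : V m} (hx : modU x) : modU (f x) := by
  rw [apply_eq_sum f x]
  refine modU_sum _ _ fun i _ => ?_
  intro j
  show ((x i * f (e i) j).coeff 0) = 0
  rw [Polynomial.mul_coeff_zero, hx i, zero_mul]

lemma modU_map_basis {m n : ℕ} (L : V m →ₗ[R] V n) (h : ∀ i, modU (L (e i))) :
    ∀ x, modU (L x) := by
  intro x
  rw [apply_eq_sum L x]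
  exact modU_sum _ _ fun i _ => modU_smul _ (h i)

theorem t1 : True := trivial
/-! ### Homogeneity lemmas -/

lemma homog_zero {n : ℕ} (gr : Fin n → ℤ) (c : ℤ) : IsHomog gr c (0 : V n) := by
  intro j m h; simp at h

lemma homog_add {n : ℕ} {gr : Fin n → ℤ} {c : ℤ} {x y : V n}
    (hx : IsHomog gr c x) (hy : IsHomog gr c y) : IsHomog gr c (x + y) := by
  intro j m h
  rw [Pi.add_apply, Polynomial.coeff_add] at h
  by_cases h1 : (x j).coeff m = 0
  · exact hy j m (by rw [h1, zero_add] at h; exact h)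
  · exact hx j m h1

lemma homog_e {n : ℕ} (gr : Fin n → ℤ) (i : Fin n) : IsHomog gr (gr i) (e i) := by
  intro j m h
  rcases eq_or_ne j i with rfl | hne
  · rw [e_self] at h
    have hm : m = 0 := by
      by_contra hm
      exact h (Polynomial.coeff_one.trans (by simp [hm]))
    subst hm; simp
  · rw [e_ne hne] at h; simp at h

lemma homog_map {m n : ℕ} {gr₁ : Fin m → ℤ} {gr₂ : Fin n → ℤ} {dg c : ℤ}
    {f : V m →ₗ[R] V n} (hf : GradedMap gr₁ gr₂ dg f) {x : V m}
    (hx : IsHomog gr₁ c x) : IsHomog gr₂ (c + dg) (f x) := by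
  intro j mm hc
  rw [apply_eq_sum f x, Finset.sum_apply] at hc
  simp only [Pi.smul_apply, smul_eq_mul] at hc
  rw [Polynomial.finset_sum_coeff] at hc
  obtain ⟨i, _, hi⟩ := Finset.exists_ne_zero_of_sum_ne_zero hc
  rw [Polynomial.coeff_mul] at hi
  obtain ⟨p, hp, hp0⟩ := Finset.exists_ne_zero_of_sum_ne_zero hi
  rw [Finset.HasAntidiagonal.mem_antidiagonal] at hp
  have h1 : (x i).coeff p.1 ≠ 0 := fun h => hp0 (by rw [h, zero_mul])
  have h2 : (f (e i) j).coeff p.2 ≠ 0 := fun h => hp0 (by rw [h, mul_zero])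
  have e1 := hx i p.1 h1
  have e2 := hf i j p.2 h2
  omega

lemma homog_Upow_smul {n : ℕ} {gr : Fin n → ℤ} {c : ℤ} {x : V n} (k : ℕ)
    (hx : IsHomog gr c x) : IsHomog gr (c - 2 * k) (Uu ^ k • x) := by
  intro j m h
  rw [Pi.smul_apply, smul_eq_mul, Uu, mul_comm, Polynomial.coeff_mul_X_pow'] at h
  by_cases hk : k ≤ m
  · rw [if_pos hk] at h
    have := hx j (m - k) h
    have : ((m - k : ℕ) : ℤ) = (m : ℤ) - k := by omega
    omega
  · rw [if_neg hk] at h; exact absurd rfl h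

lemma homog_forced_zero {n : ℕ} {gr : Fin n → ℤ} {c : ℤ} {x : V n} {G : ℤ}
    (hx : IsHomog gr c x) (hb : ∀ j, gr j ≤ G) (hc : G < c) : x = 0 := by
  funext j
  apply Polynomial.ext
  intro m
  rw [Pi.zero_apply, Polynomial.coeff_zero]
  by_contra h
  have := hx j m h
  have := hb j
  omega

/-! ### Homogeneous components -/

/-- Homogeneous degree-`c` component of a vector. -/
def hcomp {n : ℕ} (gr : Fin n → ℤ) (c : ℤ) (v : V n) : V n := fun j =>
  if 2 ∣ (gr j - c) ∧ c ≤ gr j then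
    Polynomial.monomial ((gr j - c) / 2).toNat ((v j).coeff ((gr j - c) / 2).toNat)
  else 0

lemma hcomp_add {n : ℕ} (gr : Fin n → ℤ) (c : ℤ) (v w : V n) :
    hcomp gr c (v + w) = hcomp gr c v + hcomp gr c w := by
  funext j
  simp only [hcomp, Pi.add_apply, Polynomial.coeff_add, map_add]
  split <;> simp

lemma hcomp_of_homog_eq {n : ℕ} {gr : Fin n → ℤ} {c : ℤ} {v : V n}
    (hv : IsHomog gr c v) : hcomp gr c v = v := by
  funext j
  simp only [hcomp]
  split
  · next h =>
    obtain ⟨⟨k, hk⟩, hle⟩ := h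
    have hm : ((gr j - c) / 2).toNat = k.toNat := by omega
    rw [hm]
    -- v j is a monomial in degree k.toNat (or zero)
    ext mm
    rw [Polynomial.coeff_monomial]
    rcases eq_or_ne mm k.toNat with rfl | hne
    · simp
    · rw [if_neg (fun h => hne h.symm)]
      by_contra hmm
      have := hv j mm (fun h => hmm h.symm)
      omega
  · next h =>
    -- all coefficients of v j vanish
    symm
    ext mm
    rw [Polynomial.coeff_zero]
    by_contra hmm
    have := hv j mm hmm
    rw [not_and_or] at h
    rcases h with h | h
    · exact h ⟨mm, by omega⟩
    · omega

lemma hcomp_of_homog_ne {n : ℕ} {gr : Fin n → ℤ} {c c' : ℤ} {v : V n}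
    (hv : IsHomog gr c' v) (hne : c ≠ c') : hcomp gr c v = 0 := by
  funext j
  simp only [hcomp, Pi.zero_apply]
  split
  · next h =>
    obtain ⟨⟨k, hk⟩, hle⟩ := h
    rw [Polynomial.monomial_eq_zero_iff]
    by_contra hmm
    have := hv j _ hmm
    omega
  · rfl

lemma hcomp_sum {n : ℕ} (gr : Fin n → ℤ) (c : ℤ) {ι : Type*} (s : Finset ι)
    (F : ι → V n) : hcomp gr c (∑ i ∈ s, F i) = ∑ i ∈ s, hcomp gr c (F i) := by
  classical
  induction s using Finset.induction with
  | empty =>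
    simp only [Finset.sum_empty]
    funext j; simp [hcomp]
  | insert _ _ hni ih =>
    rw [Finset.sum_insert hni, Finset.sum_insert hni, hcomp_add, ih]

/-- Decomposition into homogeneous components. -/
lemma hcomp_decomp {n : ℕ} (gr : Fin n → ℤ) (v : V n) :
    ∃ S : Finset ℤ, v = ∑ c ∈ S, hcomp gr c v := by
  classical
  set D : ℕ := Finset.univ.sup (fun j : Fin n => (v j).natDegree) with hD
  refine ⟨(Finset.univ ×ˢ Finset.range (D + 1)).image
    (fun p : Fin n × ℕ => gr p.1 - 2 * p.2), ?_⟩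
  funext j
  rw [Finset.sum_apply]
  set S := (Finset.univ ×ˢ Finset.range (D + 1)).image
    (fun p : Fin n × ℕ => gr p.1 - 2 * p.2) with hS
  set T := (Finset.range (D + 1)).image (fun m : ℕ => gr j - 2 * m) with hT
  have hTS : T ⊆ S := by
    intro c hc
    rw [hT, Finset.mem_image] at hc
    obtain ⟨m, hm, rfl⟩ := hc
    rw [hS, Finset.mem_image]
    exact ⟨⟨j, m⟩, by simpa using hm, rfl⟩
  have hzero : ∀ c ∈ S, c ∉ T → hcomp gr c v j = 0 := by
    intro c _ hcT
    simp only [hcomp]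
    split
    · next h =>
      obtain ⟨⟨k, hk⟩, hle⟩ := h
      rw [Polynomial.monomial_eq_zero_iff]
      by_contra hmm
      have hdeg : ((gr j - c) / 2).toNat ≤ (v j).natDegree :=
        Polynomial.le_natDegree_of_ne_zero hmm
      have hDj : (v j).natDegree ≤ D := Finset.le_sup (f := fun j : Fin n => (v j).natDegree) (Finset.mem_univ j)
      exact hcT (by
        rw [hT, Finset.mem_image]
        exact ⟨((gr j - c) / 2).toNat, Finset.mem_range.2 (by omega), by omega⟩)
    · rfl
  rw [← Finset.sum_subset hTS (fun c hc hcT => hzero c hc hcT)]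
  have hinj : Set.InjOn (fun m : ℕ => gr j - 2 * m) (Finset.range (D + 1)) := by
    intro a _ b _ h
    simp only at h; omega
  rw [hT, Finset.sum_image hinj]
  have : ∀ m ∈ Finset.range (D + 1),
      hcomp gr (gr j - 2 * m) v j = Polynomial.monomial m ((v j).coeff m) := by
    intro m _
    simp only [hcomp]
    rw [if_pos ⟨⟨(m : ℤ), by ring⟩, by omega⟩]
    have harg : ((gr j - (gr j - 2 * (m : ℤ))) / 2).toNat = m := by omega
    rw [harg]
  rw [Finset.sum_congr rfl this]
  exact (v j).as_sum_range' (D + 1)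
    (Nat.lt_succ_of_le (Finset.le_sup (f := fun j : Fin n => (v j).natDegree) (Finset.mem_univ j)))

lemma hcomp_homog {n : ℕ} (gr : Fin n → ℤ) (c : ℤ) (v : V n) :
    IsHomog gr c (hcomp gr c v) := by
  intro j m h
  simp only [hcomp] at h
  by_cases hb : 2 ∣ (gr j - c) ∧ c ≤ gr j
  · rw [if_pos hb] at h
    rw [Polynomial.coeff_monomial] at h
    split at h
    · next heq => obtain ⟨⟨k, hk⟩, hle⟩ := hb; omega
    · exact absurd rfl h
  · rw [if_neg hb] at h; simp at h

/-! ### Division by U -/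

def divU {n : ℕ} (v : V n) : V n := fun j => (v j).divX

lemma Usmul_divU {n : ℕ} {v : V n} (h : modU v) : Uu • divU v = v := by
  funext j
  show Uu * (v j).divX = v j
  have := Polynomial.divX_mul_X_add (v j)
  rw [h j] at this
  rw [Uu, mul_comm]
  simpa using this

lemma homog_divU {n : ℕ} {gr : Fin n → ℤ} {c : ℤ} {v : V n}
    (hv : IsHomog gr c v) : IsHomog gr (c + 2) (divU v) := by
  intro j m h
  rw [divU] at h
  simp only [Polynomial.coeff_divX] at h
  have := hv j (m + 1) h
  omega

theorem t2 : True := trivial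
/-! ### Key nontorsion lemma -/

lemma F2_eq_one {a : F2} (h : a ≠ 0) : a = 1 := by revert a; decide

lemma not_bdry_smul (C : PreCplx) (hd : GradedMap C.gr C.gr (-1) C.d)
    {x₀ : V C.n} {c₀ : ℤ} (hx : IsHomog C.gr c₀ x₀)
    (hnt : ∀ k : ℕ, ¬ IsBdry C ((Uu ^ k) • x₀)) (q : R) (hq : q ≠ 0) :
    ¬ IsBdry C (q • x₀) := by
  rintro ⟨w, hw⟩
  set m₀ := q.natDegree with hm₀
  have hqm : q.coeff m₀ ≠ 0 := by
    rw [hm₀]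
    exact Polynomial.leadingCoeff_ne_zero.2 hq
  -- decompose w
  obtain ⟨S, hSdec⟩ := hcomp_decomp C.gr w
  -- RHS computation
  have hR : C.d w = ∑ c ∈ S, C.d (hcomp C.gr c w) := by
    conv_lhs => rw [hSdec]
    rw [map_sum]
  -- apply hcomp (c₀ - 2 m₀) to both sides of hw
  have key : hcomp C.gr (c₀ - 2 * m₀) (C.d w) =
      hcomp C.gr (c₀ - 2 * m₀) (q • x₀) := by rw [hw]
  have hRHS : ∃ w', C.d w' = hcomp C.gr (c₀ - 2 * m₀) (C.d w) := by
    rw [hR, hcomp_sum]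
    have : ∀ c ∈ S, hcomp C.gr (c₀ - 2 * m₀) (C.d (hcomp C.gr c w)) =
        if c = c₀ - 2 * m₀ + 1 then C.d (hcomp C.gr c w) else 0 := by
      intro c _
      have hh : IsHomog C.gr (c + (-1)) (C.d (hcomp C.gr c w)) :=
        homog_map hd (hcomp_homog C.gr c w)
      rcases eq_or_ne c (c₀ - 2 * m₀ + 1) with rfl | hne
      · rw [if_pos rfl]
        have harg : c₀ - 2 * (m₀ : ℤ) + 1 + -1 = c₀ - 2 * m₀ := by ring
        rw [harg] at hh
        exact hcomp_of_homog_eq hh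
      · rw [if_neg hne]
        exact hcomp_of_homog_ne hh (by omega)
    rw [Finset.sum_congr rfl this, Finset.sum_ite_eq' S (c₀ - 2 * m₀ + 1)]
    split
    · exact ⟨_, rfl⟩
    · exact ⟨0, by rw [map_zero]⟩
  have hLHS : hcomp C.gr (c₀ - 2 * m₀) (q • x₀) = (Uu ^ m₀) • x₀ := by
    have hqs : q • x₀ = ∑ m ∈ q.support, ((Polynomial.monomial m (q.coeff m) : R) • x₀) := by
      rw [← Finset.sum_smul, ← Polynomial.as_sum_support q]
    rw [hqs, hcomp_sum]
    have hterm : ∀ m ∈ q.support,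
        hcomp C.gr (c₀ - 2 * m₀) ((Polynomial.monomial m (q.coeff m) : R) • x₀) =
        if m = m₀ then (Uu ^ m₀) • x₀ else 0 := by
      intro m hm
      have hc1 : q.coeff m = 1 := F2_eq_one (Polynomial.mem_support_iff.1 hm)
      have hmon : (Polynomial.monomial m (q.coeff m) : R) = Uu ^ m := by
        rw [hc1, Uu, Polynomial.X_pow_eq_monomial]
      rw [hmon]
      have hh : IsHomog C.gr (c₀ - 2 * m) ((Uu ^ m) • x₀) := homog_Upow_smul m hx
      rcases eq_or_ne m m₀ with rfl | hne
      · rw [if_pos rfl]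
        exact hcomp_of_homog_eq hh
      · rw [if_neg hne]
        exact hcomp_of_homog_ne hh (by omega)
    rw [Finset.sum_congr rfl hterm, Finset.sum_ite_eq' q.support m₀]
    rw [if_pos (Polynomial.mem_support_iff.2 hqm)]
  obtain ⟨w', hw'⟩ := hRHS
  exact hnt m₀ ⟨w', by rw [hw', key, hLHS]⟩

/-! ### seqAt / stdGr lemmas -/

lemma seqAt_append_lt {M L : List ℤ} {i : ℕ} (h : i < M.length) :
    seqAt (M ++ L) i = seqAt M i := by
  exact List.getD_append M L 0 i h

lemma seqAt_of_ge {M : List ℤ} {i : ℕ} (h : M.length ≤ i) : seqAt M i = 0 := by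
  simp only [seqAt]
  rw [List.getD_eq_default]
  exact h

lemma seqAt_append_fst (M : List ℤ) (a b : ℤ) :
    seqAt (M ++ [a, b]) M.length = a := by
  show (M ++ [a, b]).getD M.length 0 = a
  rw [List.getD_append_right M [a, b] 0 M.length (le_refl _)]
  simp

lemma seqAt_append_snd (M : List ℤ) (a b : ℤ) :
    seqAt (M ++ [a, b]) (M.length + 1) = b := by
  show (M ++ [a, b]).getD (M.length + 1) 0 = b
  rw [List.getD_append_right M [a, b] 0 (M.length + 1) (by omega)]
  simp

lemma stdGr_append {M L : List ℤ} {i : ℕ} (h : i ≤ M.length) :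
    stdGr (M ++ L) i = stdGr M i := by
  unfold stdGr
  refine Finset.sum_congr rfl fun s hs => ?_
  rw [Finset.mem_range] at hs
  rw [seqAt_append_lt (by omega)]

lemma stdGr_succ (M : List ℤ) (i : ℕ) :
    stdGr M (i + 1) = stdGr M i + (if i % 2 = 1 then bstep (seqAt M i) else 0) := by
  unfold stdGr
  rw [Finset.sum_range_succ]

theorem t3 : True := trivial
/-! ### symCplx structural lemmas -/

lemma ofMatrix_add_mat {n : ℕ} (c c' : ℕ → ℕ → R) :
    ofMatrix (n := n) (fun i j => c i j + c' i j) = ofMatrix c + ofMatrix c' := by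
  refine lext fun i => ?_
  funext j
  rw [ofMatrix_e]
  show c i j + c' i j = (ofMatrix c (e i) + ofMatrix c' (e i)) j
  rw [Pi.add_apply, ofMatrix_e, ofMatrix_e]

lemma ofMatrix_delta {n : ℕ} :
    ofMatrix (n := n) (fun i j => if i = j then 1 else 0) = LinearMap.id := by
  refine lext fun i => ?_
  funext j
  rw [ofMatrix_e]
  show (if (i : ℕ) = (j : ℕ) then (1 : R) else 0) = e i j
  rw [e]
  by_cases h : j = i
  · subst h; simp
  · rw [if_neg h, if_neg (fun hh => h (Fin.ext hh.symm))]

lemma omega_symCplx (M : List ℤ) :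
    omega (symCplx M) = ofMatrix (wCoef M) := by
  show LinearMap.id + (symCplx M).ι = _
  show LinearMap.id + ofMatrix (iCoef M) = _
  have : ofMatrix (n := M.length + 1) (iCoef M) =
      LinearMap.id + ofMatrix (wCoef M) := by
    rw [← ofMatrix_delta (n := M.length + 1), ← ofMatrix_add_mat]
    rfl
  erw [this, ← add_assoc]
  have hid : (LinearMap.id + LinearMap.id : V (M.length + 1) →ₗ[R] V (M.length + 1)) = 0 := by
    refine LinearMap.ext fun u => ?_
    show u + u = 0
    exact V_add_self u
  erw [hid, zero_add]; rfl

lemma f_omega_symCplx {m : ℕ} (M : List ℤ) (f : V (M.length + 1) →ₗ[R] V m)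
    (i : Fin (M.length + 1)) :
    f (omega (symCplx M) (e i)) = ∑ j : Fin (M.length + 1), wCoef M (i : ℕ) (j : ℕ) • f (e j) := by
  rw [omega_symCplx]; erw [apply_eq_sum f]
  refine Finset.sum_congr rfl fun j _ => ?_
  erw [ofMatrix_e]

lemma f_d_symCplx {m : ℕ} (M : List ℤ) (f : V (M.length + 1) →ₗ[R] V m)
    (i : Fin (M.length + 1)) :
    f ((symCplx M).d (e i)) = ∑ j : Fin (M.length + 1), dCoef M (i : ℕ) (j : ℕ) • f (e j) := by
  show f (ofMatrix (dCoef M) (e i)) = _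
  rw [apply_eq_sum f]
  refine Finset.sum_congr rfl fun j _ => ?_
  rw [ofMatrix_e]

/-! ### Facts about a reduced almost ι-complex -/

section AFacts

variable (A : PreAI) (hA : IsAICplx A) (hred : Reduced A)

lemma omega_graded (hA : IsAICplx A) : GradedMap A.gr A.gr 0 (omega A) := by
  intro i
  show IsHomog A.gr (A.gr i + 0) (e i + A.ι (e i))
  exact homog_add (by simpa using homog_e A.gr i) (hA.2.1 i)

lemma omega_sq_modU (hA : IsAICplx A) (hred : Reduced A) (x : V A.n) :
    modU (omega A (omega A x)) := by
  obtain ⟨H, _, hH⟩ := hA.2.2.2.1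
  have h1 := hH x
  simp only [LinearMap.add_apply, LinearMap.comp_apply, LinearMap.id_apply] at h1
  -- h1 : modU (ι (ι x) + x + H (d x) + d (H x))
  have h2 : modU (H (A.d x)) := modU_map H (hred x)
  have h3 : modU (A.d (H x)) := hred _
  have h4 : modU (A.ι (A.ι x) + x) := by
    have := modU_add (modU_add h1 h2) h3
    have heq : A.ι (A.ι x) + x + H (A.d x) + A.d (H x) + H (A.d x) + A.d (H x)
        = A.ι (A.ι x) + x := by
      have hs : ∀ v : V A.n, v + v = 0 := V_add_self
      abel_nf
      rw [show (2 : ℤ) • A.d (H x) = A.d (H x) + A.d (H x) from two_smul _ _,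
        show (2 : ℤ) • H (A.d x) = H (A.d x) + H (A.d x) from two_smul _ _]
      rw [hs, hs]
      abel
    rwa [heq] at this
  -- omega (omega x) = x + 2 ι x + ι ι x = ι ι x + x
  have ho : ∀ v, omega A v = v + A.ι v := fun v => rfl
  have heq2 : omega A (omega A x) = A.ι (A.ι x) + x := by
    rw [ho, ho, map_add]
    have hs : A.ι x + A.ι x = 0 := V_add_self _
    calc x + A.ι x + (A.ι x + A.ι (A.ι x))
        = (A.ι (A.ι x) + x) + (A.ι x + A.ι x) := by abel
      _ = A.ι (A.ι x) + x := by rw [hs, add_zero]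
  rwa [heq2]

lemma omega_d_modU (hA : IsAICplx A) (x : V A.n) :
    modU (A.d (omega A x) + omega A (A.d x)) := by
  have h1 := hA.2.2.1 x
  simp only [LinearMap.add_apply, LinearMap.comp_apply] at h1
  have ho : ∀ v, omega A v = v + A.ι v := fun v => rfl
  have heq : A.d (omega A x) + omega A (A.d x) = A.ι (A.d x) + A.d (A.ι x) := by
    rw [ho, ho, map_add]
    have hs : A.d x + A.d x = 0 := V_add_self _
    calc A.d x + A.d (A.ι x) + (A.d x + A.ι (A.d x))
        = (A.ι (A.d x) + A.d (A.ι x)) + (A.d x + A.d x) := by abel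
      _ = _ := by rw [hs, add_zero]
  rw [heq]
  exact h1

lemma d_d_zero (hA : IsAICplx A) (x : V A.n) : A.d (A.d x) = 0 := by
  have := hA.1.2
  calc A.d (A.d x) = (A.d ∘ₗ A.d) x := rfl
    _ = (0 : V A.n →ₗ[R] V A.n) x := by rw [this]
    _ = 0 := rfl

end AFacts

theorem t4 : True := trivial
/-! ### Cycle structure of standard complexes -/

lemma std_cycle_bdry (M : List ℤ) (hM : StdParams M) (x : V (M.length + 1))
    (hx : (symCplx M).toPreCplx.d x = 0) :
    ∃ (K : ℕ) (z : V (M.length + 1)),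
      (Uu ^ K) • x = (x ⟨0, Nat.succ_pos _⟩ * Uu ^ K) • e (⟨0, Nat.succ_pos _⟩ : Fin (M.length + 1))
        + (show V (M.length + 1) from (symCplx M).toPreCplx.d z) := by
  classical
  have hlen : M.length % 2 = 0 := hM.1
  have hcyc : ∀ j : Fin (M.length + 1),
      ∑ i : Fin (M.length + 1), x i * dCoef M i j = 0 := by
    intro j
    exact congrFun hx j
  have hodd : ∀ s : ℕ, ∀ hs : s < M.length, s % 2 = 1 → seqAt M s ≠ 0 := by
    intro s hs hs1
    have := hM.2 s hs
    rwa [if_neg (by omega)] at this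
  -- Step A1 : odd s with negative symbol have x s = 0
  have hA1 : ∀ s : ℕ, ∀ h1 : s % 2 = 1, ∀ h2 : seqAt M s < 0, ∀ hs : s < M.length,
      x ⟨s, by omega⟩ = 0 := by
    intro s h1 h2 hs
    have hc := hcyc ⟨s + 1, by omega⟩
    rw [Finset.sum_eq_single (⟨s, by omega⟩ : Fin (M.length + 1))] at hc
    · have hd : dCoef M s (s + 1) = Uu ^ (seqAt M s).natAbs := by
        rw [dCoef, if_pos ⟨h1, h2, rfl⟩]
      rw [hd] at hc
      rcases mul_eq_zero.1 hc with h | h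
      · exact h
      · exact absurd h (Uu_pow_ne_zero _)
    · intro i _ hne
      have hd : dCoef M (i : ℕ) (s + 1) = 0 := by
        rw [dCoef, if_neg, if_neg]
        · rintro ⟨hp, _, _, hj⟩
          omega
        · rintro ⟨hp, _, hj⟩
          exact hne (Fin.ext (show (i : ℕ) = s by omega))
      rw [hd, mul_zero]
    · intro h
      exact absurd (Finset.mem_univ _) h
  -- Step A2 : odd s with positive symbol have x (s+1) = 0
  have hA2 : ∀ s : ℕ, ∀ h1 : s % 2 = 1, ∀ h2 : 0 < seqAt M s, ∀ hs : s < M.length,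
      x ⟨s + 1, by omega⟩ = 0 := by
    intro s h1 h2 hs
    have hc := hcyc ⟨s, by omega⟩
    rw [Finset.sum_eq_single (⟨s + 1, by omega⟩ : Fin (M.length + 1))] at hc
    · have hd : dCoef M (s + 1) s = Uu ^ (seqAt M ((s + 1) - 1)).natAbs := by
        rw [dCoef, if_neg (by rintro ⟨hp, _⟩; omega),
          if_pos ⟨by omega, by omega, by simpa using h2, rfl⟩]
      rw [hd] at hc
      rcases mul_eq_zero.1 hc with h | h
      · exact h
      · exact absurd h (Uu_pow_ne_zero _)
    · intro i _ hne
      have hd : dCoef M (i : ℕ) s = 0 := by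
        rw [dCoef, if_neg, if_neg]
        · rintro ⟨hp, _, _, hj⟩
          exact hne (Fin.ext (show (i : ℕ) = s + 1 by omega))
        · rintro ⟨hp, _, hj⟩
          omega
      rw [hd, mul_zero]
    · intro h
      exact absurd (Finset.mem_univ _) h
  set K := Finset.sup (Finset.range M.length) (fun s => (seqAt M s).natAbs) with hKdef
  have hK : ∀ s, s < M.length → (seqAt M s).natAbs ≤ K := by
    intro s hs
    exact Finset.le_sup (f := fun s => (seqAt M s).natAbs) (Finset.mem_range.2 hs)
  refine ⟨K, fun i =>
    if h : (i : ℕ) % 2 = 1 ∧ seqAt M i < 0 then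
      x ⟨(i : ℕ) + 1, by have := i.isLt; omega⟩ * Uu ^ (K - (seqAt M (i : ℕ)).natAbs)
    else if h2 : (i : ℕ) % 2 = 0 ∧ 0 < (i : ℕ) ∧ 0 < seqAt M ((i : ℕ) - 1) then
      x ⟨(i : ℕ) - 1, by have := i.isLt; omega⟩ * Uu ^ (K - (seqAt M ((i : ℕ) - 1)).natAbs)
    else 0, ?_⟩
  set z : V (M.length + 1) := fun i =>
    if h : (i : ℕ) % 2 = 1 ∧ seqAt M i < 0 then
      x ⟨(i : ℕ) + 1, by have := i.isLt; omega⟩ * Uu ^ (K - (seqAt M (i : ℕ)).natAbs)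
    else if h2 : (i : ℕ) % 2 = 0 ∧ 0 < (i : ℕ) ∧ 0 < seqAt M ((i : ℕ) - 1) then
      x ⟨(i : ℕ) - 1, by have := i.isLt; omega⟩ * Uu ^ (K - (seqAt M ((i : ℕ) - 1)).natAbs)
    else 0 with hzdef
  funext j
  show Uu ^ K * x j = (x ⟨0, Nat.succ_pos _⟩ * Uu ^ K) * e (⟨0, Nat.succ_pos _⟩ : Fin (M.length + 1)) j
      + ∑ i : Fin (M.length + 1), z i * dCoef M i j
  rcases Nat.lt_or_ge 0 (j : ℕ) with hj0 | hj0
  swap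
  · -- j = 0
    have hjeq : j = ⟨0, Nat.succ_pos _⟩ := Fin.ext (show (j : ℕ) = 0 by omega)
    subst hjeq
    rw [e_self, mul_one]
    have hzero : ∀ i : Fin (M.length + 1), z i * dCoef M (i : ℕ) 0 = 0 := by
      intro i
      have hd : dCoef M (i : ℕ) 0 = 0 := by
        rw [dCoef, if_neg (by rintro ⟨_, _, hj⟩; omega), if_neg (by rintro ⟨hp, _, _, hj⟩; omega)]
      rw [hd, mul_zero]
    rw [Finset.sum_eq_zero fun i _ => hzero i, add_zero, mul_comm]
  · -- j > 0
    have hj0' : j ≠ ⟨0, Nat.succ_pos _⟩ := fun h => by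
      have : (j : ℕ) = 0 := congrArg Fin.val h
      omega
    rw [e_ne hj0', mul_zero, zero_add]
    rcases Nat.even_or_odd (j : ℕ) with hje | hjo
    · -- j even > 0 ; relevant symbol is seqAt M (j-1), an odd position < len
      have hjp : (j : ℕ) % 2 = 0 := Nat.even_iff.1 hje
      have hjlt : (j : ℕ) - 1 < M.length := by have := j.isLt; omega
      have hbne : seqAt M ((j : ℕ) - 1) ≠ 0 := hodd _ hjlt (by omega)
      rcases lt_or_gt_of_ne hbne with hb | hb
      · -- b < 0 : single term i = j - 1
        rw [Finset.sum_eq_single (⟨(j : ℕ) - 1, by omega⟩ : Fin (M.length + 1))]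
        · have hd : dCoef M ((j : ℕ) - 1) (j : ℕ) = Uu ^ (seqAt M ((j : ℕ) - 1)).natAbs := by
            rw [dCoef, if_pos ⟨by omega, hb, by omega⟩]
          have hz : z ⟨(j : ℕ) - 1, by omega⟩ =
              x j * Uu ^ (K - (seqAt M ((j : ℕ) - 1)).natAbs) := by
            rw [hzdef]
            simp only []
            rw [dif_pos ⟨by omega, hb⟩]
            congr 1
            exact congrArg x (Fin.ext (show (j : ℕ) - 1 + 1 = (j : ℕ) by omega))
          rw [hd, hz, mul_assoc, ← pow_add]
          rw [Nat.sub_add_cancel (hK _ hjlt)]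
          ring
        · intro i _ hne
          have hd : dCoef M (i : ℕ) (j : ℕ) = 0 := by
            rw [dCoef, if_neg, if_neg]
            · rintro ⟨hp, _, _, hj⟩
              omega
            · rintro ⟨hp, _, hj⟩
              exact hne (Fin.ext (show (i : ℕ) = (j : ℕ) - 1 by omega))
          rw [hd, mul_zero]
        · intro h
          exact absurd (Finset.mem_univ _) h
      · -- b > 0 : x j = 0 and all terms vanish
        have hxj : x j = 0 := by
          have := hA2 ((j : ℕ) - 1) (by omega) hb hjlt
          rw [show (⟨(j : ℕ) - 1 + 1, by omega⟩ : Fin (M.length + 1)) = j from Fin.ext (show (j : ℕ) - 1 + 1 = (j : ℕ) by omega)] at this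
          exact this
        rw [hxj, mul_zero]
        symm
        refine Finset.sum_eq_zero fun i _ => ?_
        rcases eq_or_ne (i : ℕ) ((j : ℕ) - 1) with hij | hij
        · have hd : dCoef M (i : ℕ) (j : ℕ) = 0 := by
            rw [dCoef, if_neg, if_neg]
            · rintro ⟨hp, _, _, hj⟩
              omega
            · rintro ⟨hp, hneg, hj⟩
              rw [hij] at hneg
              omega
          rw [hd, mul_zero]
        · have hd : dCoef M (i : ℕ) (j : ℕ) = 0 := by
            rw [dCoef, if_neg, if_neg]
            · rintro ⟨hp, _, _, hj⟩
              omega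
            · rintro ⟨hp, _, hj⟩
              omega
          rw [hd, mul_zero]
    · -- j odd ; then j < len, relevant symbol seqAt M j
      have hjp : (j : ℕ) % 2 = 1 := Nat.odd_iff.1 hjo
      have hjlt : (j : ℕ) < M.length := by have := j.isLt; omega
      have hbne : seqAt M (j : ℕ) ≠ 0 := hodd _ hjlt hjp
      rcases lt_or_gt_of_ne hbne with hb | hb
      · -- b < 0 : x j = 0, terms vanish
        have hxj : x j = 0 := by
          have := hA1 (j : ℕ) hjp hb hjlt
          rw [show (⟨(j : ℕ), by omega⟩ : Fin (M.length + 1)) = j from Fin.ext rfl] at this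
          exact this
        rw [hxj, mul_zero]
        symm
        refine Finset.sum_eq_zero fun i _ => ?_
        have hd : dCoef M (i : ℕ) (j : ℕ) = 0 := by
          rw [dCoef, if_neg, if_neg]
          · rintro ⟨hp, _, hj⟩
            -- i = j + 1, i even, seqAt M (i - 1) = seqAt M j > 0 : contradiction with hb
            have hii : (i : ℕ) = (j : ℕ) + 1 := by omega
            rw [hii] at hj
            simp only [Nat.add_sub_cancel] at hj
            omega
          · rintro ⟨hp, _, hj⟩
            omega
        rw [hd, mul_zero]
      · -- b > 0 : single term i = j + 1
        rw [Finset.sum_eq_single (⟨(j : ℕ) + 1, by omega⟩ : Fin (M.length + 1))]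
        · have hd : dCoef M ((j : ℕ) + 1) (j : ℕ) = Uu ^ (seqAt M (j : ℕ)).natAbs := by
            rw [dCoef, if_neg (by rintro ⟨hp, _⟩; omega),
              if_pos ⟨by omega, by omega, by simpa using hb, rfl⟩]
            simp [Nat.add_sub_cancel]
          have hz : z ⟨(j : ℕ) + 1, by omega⟩ = x j * Uu ^ (K - (seqAt M (j : ℕ)).natAbs) := by
            rw [hzdef]
            simp only []
            rw [dif_neg (by rintro ⟨hp, _⟩; omega), dif_pos ⟨by omega, by omega, by simpa using hb⟩]
            simp [Nat.add_sub_cancel]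
          rw [hd, hz]
          rw [mul_assoc, ← pow_add, Nat.sub_add_cancel (hK _ hjlt)]
          ring
        · intro i _ hne
          have hd : dCoef M (i : ℕ) (j : ℕ) = 0 := by
            rw [dCoef, if_neg, if_neg]
            · rintro ⟨hp, _, _, hj⟩
              exact hne (Fin.ext (show (i : ℕ) = (j : ℕ) + 1 by omega))
            · rintro ⟨hp, _, hj⟩
              omega
          rw [hd, mul_zero]
        · intro h
          exact absurd (Finset.mem_univ _) h

theorem t5 : True := trivial
/-! ### Locality of chain maps from standard complexes -/

lemma stdGr_zero (M : List ℤ) : stdGr M 0 = 0 := by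
  simp [stdGr]

lemma std_local (M : List ℤ) (hM : StdParams M) (A : PreAI) (hA : IsAICplx A)
    (f : V (M.length + 1) →ₗ[R] V A.n)
    (hgr : GradedMap (symCplx M).gr A.gr 0 f)
    (hchain : f ∘ₗ (symCplx M).toPreCplx.d = A.d ∘ₗ f)
    (hnt : NontorsionClass A.toPreCplx (f (e ⟨0, Nat.succ_pos _⟩))) :
    ∀ x, NontorsionClass (symCplx M).toPreCplx x → NontorsionClass A.toPreCplx (f x) := by
  intro x hx
  obtain ⟨hxc, hxnt⟩ := hx
  have hfd : ∀ u, f ((symCplx M).toPreCplx.d u) = A.d (f u) := by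
    intro u
    exact LinearMap.congr_fun hchain u
  constructor
  · show A.d (f x) = 0
    rw [← hfd, hxc]; exact map_zero f
  · intro k hbd
    obtain ⟨w, hw⟩ := hbd
    obtain ⟨K, z, hKz⟩ := std_cycle_bdry M hM x hxc
    set x0 := x ⟨0, Nat.succ_pos _⟩ with hx0def
    by_cases h0 : x0 = 0
    · refine hxnt K ⟨z, ?_⟩
      erw [hKz, show x ⟨0, Nat.succ_pos _⟩ = 0 from h0, zero_mul, zero_smul, zero_add]
    · have ht0 : IsHomog A.gr 0 (f (e ⟨0, Nat.succ_pos _⟩)) := by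
        have := hgr ⟨0, Nat.succ_pos _⟩
        have hg : (symCplx M).gr ⟨0, Nat.succ_pos _⟩ + 0 = 0 := by
          show stdGr M 0 + 0 = 0
          rw [stdGr_zero, add_zero]
        rwa [hg] at this
      have h1 : (Uu ^ K) • f x = (x0 * Uu ^ K) • f (e ⟨0, Nat.succ_pos _⟩) + A.d (f z) := by
        have := congrArg f hKz
        erw [map_smul, map_add, map_smul, hfd] at this
        exact this
      -- multiply h1 by Uu^k and use hw : A.d w = Uu^k • f x
      have h2 : (x0 * Uu ^ (k + K)) • f (e ⟨0, Nat.succ_pos _⟩)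
          = A.d ((Uu ^ K) • w + (Uu ^ k) • f z) := by
        have h3 := congrArg (fun v => (Uu ^ k) • v) h1
        simp only [smul_add, smul_smul] at h3
        -- LHS of h3 : Uu^k • Uu^K • f x = Uu^K • (A.d w)
        have h4 : (Uu ^ k * Uu ^ K) • f x = A.d ((Uu ^ K) • w) := by
          rw [map_smul, hw, smul_smul, mul_comm]
        rw [h4] at h3
        -- h3 : A.d (Uu^K • w) = (Uu^k * (x0 * Uu^K)) • t + Uu^k • A.d (f z)
        have h5 : Uu ^ k * (x0 * Uu ^ K) = x0 * Uu ^ (k + K) := by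
          rw [pow_add]; ring
        rw [h5] at h3
        have h6 : (Uu ^ k) • A.d (f z) = A.d ((Uu ^ k) • f z) := by rw [map_smul]
        rw [h6] at h3
        -- h3 : A.d (Uu^K • w) = (x0 * Uu^(k+K)) • t + A.d (Uu^k • f z)
        have := congrArg (fun v => v + A.d ((Uu ^ k) • f z)) h3
        rw [add_assoc, V_add_self, add_zero] at this
        rw [← map_add] at this
        exact this.symm
      exact not_bdry_smul A.toPreCplx hA.1.1 ht0 hnt.2 (x0 * Uu ^ (k + K))
        (mul_ne_zero h0 (Uu_pow_ne_zero _)) ⟨_, h2.symm⟩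

theorem t6 : True := trivial
/-! ### Coefficient evaluation lemmas -/

lemma dCoef_odd {M : List ℤ} {i : ℕ} (hp : i % 2 = 1) (j : ℕ) :
    dCoef M i j = if seqAt M i < 0 ∧ j = i + 1 then Uu ^ (seqAt M i).natAbs else 0 := by
  rw [dCoef]
  by_cases h : seqAt M i < 0 ∧ j = i + 1
  · rw [if_pos ⟨hp, h.1, h.2⟩, if_pos h]
  · rw [if_neg (by rintro ⟨_, h1, h2⟩; exact h ⟨h1, h2⟩), if_neg h,
      if_neg (by rintro ⟨hh, _⟩; omega)]

lemma dCoef_even {M : List ℤ} {i : ℕ} (hp : i % 2 = 0) (j : ℕ) :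
    dCoef M i j = if 0 < i ∧ 0 < seqAt M (i - 1) ∧ j + 1 = i then
      Uu ^ (seqAt M (i - 1)).natAbs else 0 := by
  rw [dCoef, if_neg (by rintro ⟨hh, _⟩; omega)]
  by_cases h : 0 < i ∧ 0 < seqAt M (i - 1) ∧ j + 1 = i
  · rw [if_pos ⟨hp, h.1, h.2.1, h.2.2⟩, if_pos h]
  · rw [if_neg (by rintro ⟨_, h1, h2, h3⟩; exact h ⟨h1, h2, h3⟩), if_neg h]

lemma wCoef_even {M : List ℤ} {i : ℕ} (hp : i % 2 = 0) (j : ℕ) :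
    wCoef M i j = if seqAt M i = -1 ∧ j = i + 1 then 1 else 0 := by
  rw [wCoef]
  by_cases h : seqAt M i = -1 ∧ j = i + 1
  · rw [if_pos ⟨hp, h.1, h.2⟩, if_pos h]
  · rw [if_neg (by rintro ⟨_, h1, h2⟩; exact h ⟨h1, h2⟩), if_neg h,
      if_neg (by rintro ⟨hh, _⟩; omega)]

lemma wCoef_odd {M : List ℤ} {i : ℕ} (hp : i % 2 = 1) (j : ℕ) :
    wCoef M i j = if seqAt M (i - 1) = 1 ∧ j + 1 = i then 1 else 0 := by
  rw [wCoef, if_neg (by rintro ⟨hh, _⟩; omega)]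
  by_cases h : seqAt M (i - 1) = 1 ∧ j + 1 = i
  · rw [if_pos ⟨hp, h.1, h.2⟩, if_pos h]
  · rw [if_neg (by rintro ⟨_, h1, h2⟩; exact h ⟨h1, h2⟩), if_neg h]

lemma dCoef_append_old {M L : List ℤ} (hlen : M.length % 2 = 0) {i : ℕ}
    (hi : i ≤ M.length) (j : ℕ) : dCoef (M ++ L) i j = dCoef M i j := by
  rcases Nat.even_or_odd i with hp | hp
  · have hp' : i % 2 = 0 := Nat.even_iff.1 hp
    rw [dCoef_even hp', dCoef_even hp']
    by_cases h0 : 0 < i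
    · rw [seqAt_append_lt (by omega)]
    · rw [if_neg (by rintro ⟨h, _⟩; omega), if_neg (by rintro ⟨h, _⟩; omega)]
  · have hp' : i % 2 = 1 := Nat.odd_iff.1 hp
    have hilt : i < M.length := by omega
    rw [dCoef_odd hp', dCoef_odd hp', seqAt_append_lt hilt]

lemma wCoef_append_old {M L : List ℤ} {i : ℕ}
    (hi : i < M.length) (j : ℕ) : wCoef (M ++ L) i j = wCoef M i j := by
  rcases Nat.even_or_odd i with hp | hp
  · have hp' : i % 2 = 0 := Nat.even_iff.1 hp
    rw [wCoef_even hp', wCoef_even hp', seqAt_append_lt hi]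
  · have hp' : i % 2 = 1 := Nat.odd_iff.1 hp
    rw [wCoef_odd hp', wCoef_odd hp', seqAt_append_lt (by omega)]

lemma stdParams_append (M : List ℤ) (hM : StdParams M) :
    StdParams (M ++ [-1, -1]) := by
  constructor
  · simp [hM.1]
  · intro i hi
    have hL : (M ++ [(-1 : ℤ), -1]).length = M.length + 2 := by simp
    rcases Nat.lt_or_ge i M.length with h | h
    · have hs := seqAt_append_lt (L := [(-1 : ℤ), -1]) h
      have := hM.2 i h
      split at this <;> rename_i hpp
      · rw [if_pos hpp, hs]; exact this
      · rw [if_neg hpp, hs]; exact this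
    · have hl := hM.1
      rcases Nat.eq_or_lt_of_le h with heq | h2
      · have hpp : i % 2 = 0 := by omega
        rw [if_pos hpp, ← heq, seqAt_append_fst]
        right; rfl
      · have hieq : i = M.length + 1 := by omega
        subst hieq
        rw [if_neg (by omega : ¬ (M.length + 1) % 2 = 0), seqAt_append_snd]
        norm_num

lemma sum_split2 {β : Type*} [AddCommMonoid β] (n : ℕ) (F : Fin (n + 2) → β) :
    ∑ j, F j = (∑ j : Fin n, F ⟨(j : ℕ), by omega⟩) + F ⟨n, by omega⟩ + F ⟨n + 1, by omega⟩ := by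
  rw [Fin.sum_univ_castSucc, Fin.sum_univ_castSucc]
  rfl

lemma sum_split_last2 {β : Type*} [AddCommMonoid β] {n m : ℕ} (h : m = n + 2) (F : Fin m → β) :
    ∑ j, F j = (∑ j : Fin n, F ⟨(j : ℕ), by omega⟩) + F ⟨n, by omega⟩ + F ⟨n + 1, by omega⟩ := by
  subst h
  exact sum_split2 n F

theorem t7 : True := trivial
/-! ### The extension step -/

lemma extension_step (A : PreAI) (hA : IsAICplx A) (hred : Reduced A)
    (M : List ℤ) (hM : StdParams M) (f : V (M.length + 1) →ₗ[R] V A.n)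
    (hf : isShortMap M A f) :
    ∃ f₂ : V ((M ++ [-1, -1]).length + 1) →ₗ[R] V A.n,
      isShortMap (M ++ [-1, -1]) A f₂ ∧
      (∀ (i : ℕ) (hi : i < M.length + 1) (hi2 : i < (M ++ [-1, -1]).length + 1),
        f₂ (e ⟨i, hi2⟩) = f (e ⟨i, hi⟩)) ∧
      stdGr (M ++ [-1, -1]) (M ++ [-1, -1]).length = stdGr M M.length + 1 := by
  classical
  have hlen : M.length % 2 = 0 := hM.1
  have hL2 : (M ++ [(-1 : ℤ), -1]).length = M.length + 2 := by simp
  have hs0 : seqAt (M ++ [-1, -1]) M.length = -1 := seqAt_append_fst M _ _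
  have hs1 : seqAt (M ++ [-1, -1]) (M.length + 1) = -1 := seqAt_append_snd M _ _
  set x := f (e ⟨M.length, Nat.lt_succ_self _⟩) with hxdef
  set y := omega A x with hydef
  have hmodv : modU (A.d y) := hred y
  set z := divU (A.d y) with hzdef
  have hUz : Uu • z = A.d y := Usmul_divU hmodv
  set c := stdGr M M.length with hcdef
  -- homogeneity
  have hx_h : IsHomog A.gr c x := by
    have h := hf.1 ⟨M.length, Nat.lt_succ_self _⟩
    have hg : (symCplx M).gr ⟨M.length, Nat.lt_succ_self _⟩ + 0 = c := by
      show stdGr M M.length + 0 = c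
      rw [add_zero]
    rwa [hg] at h
  have hy_h : IsHomog A.gr c y := by
    have := homog_map (omega_graded A hA) hx_h
    rwa [add_zero] at this
  have hv_h : IsHomog A.gr (c - 1) (A.d y) := by
    have := homog_map hA.1.1 hy_h
    rwa [show c + (-1) = c - 1 from by ring] at this
  have hz_h : IsHomog A.gr (c + 1) z := by
    have := homog_divU hv_h
    rwa [show c - 1 + 2 = c + 1 from by ring] at this
  -- gradings of the extended complex
  have hgr_old : ∀ i ≤ M.length, stdGr (M ++ [-1, -1]) i = stdGr M i :=
    fun i hi => stdGr_append hi
  have hgr_y : stdGr (M ++ [-1, -1]) (M.length + 1) = c := by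
    rw [stdGr_succ, hgr_old M.length (le_refl _), if_neg (by omega), add_zero]
  have hgr_z : stdGr (M ++ [-1, -1]) (M.length + 2) = c + 1 := by
    rw [stdGr_succ, hgr_y, if_pos (by omega), hs1]
    norm_num [bstep]
  -- the extended map
  set g : Fin ((M ++ [-1, -1]).length + 1) → V A.n := fun i =>
    if h : (i : ℕ) < M.length + 1 then f (e ⟨(i : ℕ), h⟩)
    else if (i : ℕ) = M.length + 1 then y else z with hgdef
  have hg_old : ∀ (i : ℕ) (hi : i < M.length + 1) (hi2 : i < (M ++ [-1, -1]).length + 1),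
      mk g (e ⟨i, hi2⟩) = f (e ⟨i, hi⟩) := by
    intro i hi hi2
    rw [mk_e, hgdef]
    show (if h : i < M.length + 1 then f (e ⟨i, h⟩)
      else if i = M.length + 1 then y else z) = f (e ⟨i, hi⟩)
    rw [dif_pos hi]
  have hg2 : ∀ (j : Fin (M.length + 1)) (pf : (j : ℕ) < (M ++ [-1, -1]).length + 1),
      mk g (e ⟨(j : ℕ), pf⟩) = f (e j) := by
    intro j pf
    have h := hg_old (j : ℕ) j.isLt pf
    simp only [Fin.eta] at h
    exact h
  have hg_y : ∀ (hi2 : M.length + 1 < (M ++ [-1, -1]).length + 1),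
      mk g (e ⟨M.length + 1, hi2⟩) = y := by
    intro hi2
    rw [mk_e, hgdef]
    show (if h : M.length + 1 < M.length + 1 then f (e ⟨M.length + 1, h⟩)
      else if M.length + 1 = M.length + 1 then y else z) = y
    rw [dif_neg (by omega), if_pos rfl]
  have hg_z : ∀ (hi2 : M.length + 1 + 1 < (M ++ [-1, -1]).length + 1),
      mk g (e ⟨M.length + 1 + 1, hi2⟩) = z := by
    intro hi2
    rw [mk_e, hgdef]
    show (if h : M.length + 1 + 1 < M.length + 1 then f (e ⟨M.length + 1 + 1, h⟩)
      else if M.length + 1 + 1 = M.length + 1 then y else z) = z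
    rw [dif_neg (by omega), if_neg (by omega)]
  refine ⟨mk g, ⟨?grad, ?chain, ?omg⟩, hg_old, by rw [hL2]; exact hgr_z⟩
  -- graded
  case grad =>
    rintro ⟨iv, hilt⟩
    have hivb : iv < M.length + 3 := by
      have h : iv < (M ++ [-1, -1]).length + 1 := hilt
      omega
    show IsHomog A.gr (stdGr (M ++ [-1, -1]) iv + 0) (mk g (e ⟨iv, hilt⟩))
    rcases Nat.lt_or_ge iv (M.length + 1) with h1 | h1
    · rw [hg_old iv h1 hilt, hgr_old iv (by omega)]
      exact hf.1 ⟨iv, h1⟩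
    · rcases Nat.eq_or_lt_of_le h1 with heq | h2
      · have hiv : iv = M.length + 1 := heq.symm
        subst hiv
        rw [hg_y hilt, hgr_y, add_zero]
        exact hy_h
      · have hiv : iv = M.length + 1 + 1 := by omega
        subst hiv
        rw [hg_z hilt]
        rw [show M.length + 1 + 1 = M.length + 2 from rfl, hgr_z, add_zero]
        exact hz_h
  -- chain map
  case chain =>
    rintro ⟨iv, hilt⟩ -
    have hivb : iv < M.length + 3 := by
      have h : iv < (M ++ [-1, -1]).length + 1 := hilt
      omega
    rw [f_d_symCplx (M ++ [-1, -1]) (mk g) ⟨iv, hilt⟩]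
    rw [sum_split_last2 (show (M ++ [(-1 : ℤ), -1]).length + 1 = (M.length + 1) + 2 by omega)]
    simp only [Fin.val_mk]
    rcases Nat.lt_or_ge iv (M.length + 1) with h1 | h1
    · -- old generators
      have hz1 : dCoef (M ++ [-1, -1]) iv (M.length + 1) = 0 := by
        rcases Nat.even_or_odd iv with hp | hp
        · rw [dCoef_even (Nat.even_iff.1 hp), if_neg (by rintro ⟨_, _, hh⟩; omega)]
        · rw [dCoef_odd (Nat.odd_iff.1 hp), if_neg ?_]
          rintro ⟨_, hh⟩
          have := Nat.odd_iff.1 hp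
          omega
      have hz2 : dCoef (M ++ [-1, -1]) iv (M.length + 1 + 1) = 0 := by
        rcases Nat.even_or_odd iv with hp | hp
        · rw [dCoef_even (Nat.even_iff.1 hp), if_neg (by rintro ⟨_, _, hh⟩; omega)]
        · rw [dCoef_odd (Nat.odd_iff.1 hp), if_neg (by rintro ⟨_, hh⟩; omega)]
      rw [hz1, hz2, zero_smul, zero_smul, add_zero, add_zero]
      have hterm : ∀ j : Fin (M.length + 1),
          dCoef (M ++ [-1, -1]) iv (j : ℕ)
            • mk g (e (⟨(j : ℕ), by have := j.isLt; omega⟩ : Fin ((M ++ [-1, -1]).length + 1)))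
          = dCoef M iv (j : ℕ) • f (e j) := by
        intro j
        exact congrArg₂ (· • ·) (dCoef_append_old hlen (by omega) (j : ℕ)) (hg2 j _)
      rw [Finset.sum_congr rfl (fun j _ => hterm j)]
      rw [← f_d_symCplx M f ⟨iv, h1⟩, hg_old iv h1 hilt]
      exact hf.2.1 ⟨iv, h1⟩ (Or.inr hlen)
    · rcases Nat.eq_or_lt_of_le h1 with heq | h2
      · -- iv = len + 1 : d y = U z
        have hiv : iv = M.length + 1 := heq.symm
        subst hiv
        have hodd : (M.length + 1) % 2 = 1 := by omega
        have hz1 : dCoef (M ++ [-1, -1]) (M.length + 1) (M.length + 1) = 0 := by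
          rw [dCoef_odd hodd, if_neg (by rintro ⟨_, hh⟩; omega)]
        have hz2 : dCoef (M ++ [-1, -1]) (M.length + 1) (M.length + 1 + 1) = Uu := by
          rw [dCoef_odd hodd, if_pos ⟨by rw [hs1]; norm_num, rfl⟩, hs1]
          norm_num
        have hterm : ∀ j : Fin (M.length + 1),
            dCoef (M ++ [-1, -1]) (M.length + 1) (j : ℕ)
              • mk g (e (⟨(j : ℕ), by have := j.isLt; omega⟩ : Fin ((M ++ [-1, -1]).length + 1)))
            = 0 := by
          intro j
          have hc : dCoef (M ++ [-1, -1]) (M.length + 1) (j : ℕ) = 0 := by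
            rw [dCoef_odd hodd, if_neg ?_]
            rintro ⟨_, hh⟩
            have := j.isLt
            omega
          rw [hc, zero_smul]
        rw [Finset.sum_congr rfl (fun j _ => hterm j), Finset.sum_const_zero, hz1, hz2,
          zero_smul, zero_add, zero_add, hg_y hilt, hg_z (by omega)]
        exact hUz.symm
      · -- iv = len + 2 : d z = 0
        have hiv : iv = M.length + 1 + 1 := by omega
        subst hiv
        have hev : (M.length + 1 + 1) % 2 = 0 := by omega
        have hcond : ∀ j : ℕ, dCoef (M ++ [-1, -1]) (M.length + 1 + 1) j = 0 := by
          intro j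
          rw [dCoef_even hev, if_neg ?_]
          rintro ⟨_, hh, _⟩
          rw [show M.length + 1 + 1 - 1 = M.length + 1 from rfl, hs1] at hh
          omega
        have hterm : ∀ j : Fin (M.length + 1),
            dCoef (M ++ [-1, -1]) (M.length + 1 + 1) (j : ℕ)
              • mk g (e (⟨(j : ℕ), by have := j.isLt; omega⟩ : Fin ((M ++ [-1, -1]).length + 1)))
            = 0 := by
          intro j
          rw [hcond, zero_smul]
        rw [Finset.sum_congr rfl (fun j _ => hterm j), Finset.sum_const_zero, hcond, hcond,
          zero_smul, zero_smul, add_zero, add_zero, hg_z hilt]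
        have h0 : Uu • A.d z = 0 := by
          rw [← map_smul, hUz, d_d_zero A hA]
        exact Usmul_eq_zero h0
  -- omega condition
  case omg =>
    rintro ⟨iv, hilt⟩ hcond
    have hivb : iv < M.length + 3 := by
      have h : iv < (M ++ [-1, -1]).length + 1 := hilt
      omega
    have hcond' : iv < M.length + 2 := by
      rcases hcond with h | h
      · have hh : iv < (M ++ [-1, -1]).length := h
        omega
      · omega
    rw [f_omega_symCplx (M ++ [-1, -1]) (mk g) ⟨iv, hilt⟩]
    rw [sum_split_last2 (show (M ++ [(-1 : ℤ), -1]).length + 1 = (M.length + 1) + 2 by omega)]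
    simp only [Fin.val_mk]
    rcases Nat.lt_or_ge iv M.length with h1 | h1
    · -- old generators
      have hz1 : wCoef (M ++ [-1, -1]) iv (M.length + 1) = 0 := by
        rcases Nat.even_or_odd iv with hp | hp
        · rw [wCoef_even (Nat.even_iff.1 hp), if_neg (by rintro ⟨_, hh⟩; omega)]
        · rw [wCoef_odd (Nat.odd_iff.1 hp), if_neg (by rintro ⟨_, hh⟩; omega)]
      have hz2 : wCoef (M ++ [-1, -1]) iv (M.length + 1 + 1) = 0 := by
        rcases Nat.even_or_odd iv with hp | hp
        · rw [wCoef_even (Nat.even_iff.1 hp), if_neg (by rintro ⟨_, hh⟩; omega)]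
        · rw [wCoef_odd (Nat.odd_iff.1 hp), if_neg (by rintro ⟨_, hh⟩; omega)]
      rw [hz1, hz2, zero_smul, zero_smul, add_zero, add_zero]
      have hterm : ∀ j : Fin (M.length + 1),
          wCoef (M ++ [-1, -1]) iv (j : ℕ)
            • mk g (e (⟨(j : ℕ), by have := j.isLt; omega⟩ : Fin ((M ++ [-1, -1]).length + 1)))
          = wCoef M iv (j : ℕ) • f (e j) := by
        intro j
        exact congrArg₂ (· • ·) (wCoef_append_old h1 (j : ℕ)) (hg2 j _)
      rw [Finset.sum_congr rfl (fun j _ => hterm j)]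
      rw [← f_omega_symCplx M f ⟨iv, by omega⟩, hg_old iv (by omega) hilt]
      exact hf.2.2 ⟨iv, by omega⟩ (Or.inl h1)
    · rcases Nat.eq_or_lt_of_le h1 with heq | h2
      · -- iv = len : omega x = y
        have hiv : iv = M.length := heq.symm
        subst hiv
        have hz1 : wCoef (M ++ [-1, -1]) M.length (M.length + 1) = 1 := by
          rw [wCoef_even hlen, if_pos ⟨hs0, rfl⟩]
        have hz2 : wCoef (M ++ [-1, -1]) M.length (M.length + 1 + 1) = 0 := by
          rw [wCoef_even hlen, if_neg (by rintro ⟨_, hh⟩; omega)]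
        have hterm : ∀ j : Fin (M.length + 1),
            wCoef (M ++ [-1, -1]) M.length (j : ℕ)
              • mk g (e (⟨(j : ℕ), by have := j.isLt; omega⟩ : Fin ((M ++ [-1, -1]).length + 1)))
            = 0 := by
          intro j
          have hc : wCoef (M ++ [-1, -1]) M.length (j : ℕ) = 0 := by
            rw [wCoef_even hlen, if_neg ?_]
            rintro ⟨_, hh⟩
            have := j.isLt
            omega
          rw [hc, zero_smul]
        rw [Finset.sum_congr rfl (fun j _ => hterm j), Finset.sum_const_zero, hz1, hz2,
          zero_smul, zero_add, add_zero, one_smul, hg_y (by omega)]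
        rw [hg_old M.length (Nat.lt_succ_self _) hilt]
        have hxx : omega A (f (e ⟨M.length, Nat.lt_succ_self _⟩)) + y = y + y := by
          rw [hydef, hxdef]
        rw [hxx, V_add_self]
        exact modU_zero
      · -- iv = len + 1 : modU (omega y)
        have hiv : iv = M.length + 1 := by omega
        subst hiv
        have hodd : (M.length + 1) % 2 = 1 := by omega
        have hcof : ∀ j : ℕ, wCoef (M ++ [-1, -1]) (M.length + 1) j = 0 := by
          intro j
          rw [wCoef_odd hodd, if_neg ?_]
          rintro ⟨hh, _⟩
          rw [show M.length + 1 - 1 = M.length from rfl, hs0] at hh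
          omega
        have hterm : ∀ j : Fin (M.length + 1),
            wCoef (M ++ [-1, -1]) (M.length + 1) (j : ℕ)
              • mk g (e (⟨(j : ℕ), by have := j.isLt; omega⟩ : Fin ((M ++ [-1, -1]).length + 1)))
            = 0 := by
          intro j
          rw [hcof, zero_smul]
        rw [Finset.sum_congr rfl (fun j _ => hterm j), Finset.sum_const_zero, hcof, hcof,
          zero_smul, zero_smul, add_zero, add_zero, add_zero, hg_y hilt]
        rw [hydef]
        exact omega_sq_modU A hA hred x

theorem t8 : True := trivial
/-! ### Assembly -/

lemma hom_helper {m n : ℕ} (ι₁ d₁ : V m →ₗ[R] V m) (ι₂ d₂ : V n →ₗ[R] V n)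
    (f : V m →ₗ[R] V n) (h : ∀ i, modU (f (ι₁ (e i)) + ι₂ (f (e i)))) :
    ∀ x, modU ((f ∘ₗ ι₁ + ι₂ ∘ₗ f + (0 : V m →ₗ[R] V n) ∘ₗ d₁ + d₂ ∘ₗ (0 : V m →ₗ[R] V n)) x) := by
  intro x
  have heq : (f ∘ₗ ι₁ + ι₂ ∘ₗ f + (0 : V m →ₗ[R] V n) ∘ₗ d₁ + d₂ ∘ₗ (0 : V m →ₗ[R] V n)) = (f ∘ₗ ι₁ + ι₂ ∘ₗ f) := by
    refine LinearMap.ext fun v => ?_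
    simp
  rw [heq]
  refine modU_map_basis _ (fun i => ?_) x
  simpa using h i

lemma finish_stop (A : PreAI) (hA : IsAICplx A) (M : List ℤ) (hM : StdParams M)
    (f : V (M.length + 1) →ₗ[R] V A.n) (hf : isShortMap M A f)
    (hstop : modU (omega A (f (e ⟨M.length, Nat.lt_succ_self _⟩)))) :
    isAIMorphism (symCplx M) A f := by
  classical
  refine ⟨hf.1, ?chain, 0, ?grH, ?hom⟩
  case chain =>
    refine lext fun i => ?_
    show f ((symCplx M).toPreCplx.d (e i)) = A.d (f (e i))
    exact (hf.2.1 i (Or.inr hM.1)).symm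
  case grH =>
    intro i
    show IsHomog A.gr ((symCplx M).gr i + 1) ((0 : V (symCplx M).n →ₗ[R] V A.n) (e i))
    rw [LinearMap.zero_apply]
    exact homog_zero _ _
  case hom =>
    have key : ∀ i : Fin (symCplx M).n, modU (f ((symCplx M).ι (e i)) + A.ι (f (e i))) := by
      intro i
      have cancel : ∀ a b c : V A.n, a + c + (b + c) = a + b := by
        intro a b c
        calc a + c + (b + c) = (a + b) + (c + c) := by abel
          _ = a + b := by rw [V_add_self, add_zero]
      have h1 : (symCplx M).ι (e i) = omega (symCplx M) (e i) + e i := by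
        have hω : omega (symCplx M) (e i) = e i + (symCplx M).ι (e i) := rfl
        rw [hω]
        calc (symCplx M).ι (e i)
            = (symCplx M).ι (e i) + (e i + e i) := by rw [V_add_self, add_zero]
          _ = e i + (symCplx M).ι (e i) + e i := by abel
      have h2 : A.ι (f (e i)) = omega A (f (e i)) + f (e i) := by
        have hω : omega A (f (e i)) = f (e i) + A.ι (f (e i)) := rfl
        rw [hω]
        calc A.ι (f (e i))
            = A.ι (f (e i)) + (f (e i) + f (e i)) := by rw [V_add_self, add_zero]
          _ = f (e i) + A.ι (f (e i)) + f (e i) := by abel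
      have hL : f ((symCplx M).ι (e i)) + A.ι (f (e i))
          = f (omega (symCplx M) (e i)) + omega A (f (e i)) := by
        rw [h1, h2]; erw [map_add]
        exact cancel _ _ _
      rw [hL]
      rcases i with ⟨iv, hilt⟩
      have hb : iv < M.length + 1 := hilt
      rcases Nat.lt_or_ge iv M.length with hlt | hge
      · have := hf.2.2 ⟨iv, hb⟩ (Or.inl hlt)
        rw [add_comm]
        exact this
      · have hiv : iv = M.length := by omega
        subst hiv
        have hw0 : omega (symCplx M) (e ⟨M.length, hilt⟩) = 0 := by
          rw [omega_symCplx]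
          funext j
          rw [ofMatrix_e, wCoef_even hM.1]
          rw [if_neg ?_]
          · rfl
          rintro ⟨hh, _⟩
          rw [seqAt_of_ge (le_refl _)] at hh
          omega
        rw [hw0]; erw [map_zero, zero_add]
        exact hstop
    exact hom_helper (symCplx M).ι (symCplx M).toPreCplx.d A.ι A.d f key

lemma extension_rec (A : PreAI) (hA : IsAICplx A) (hred : Reduced A) :
    ∀ (t : ℕ) (M : List ℤ), StdParams M → ∀ (f : V (M.length + 1) →ₗ[R] V A.n),
      isShortMap M A f →
      (((Finset.univ.sup (fun j : Fin A.n => (A.gr j).toNat) : ℕ) : ℤ) + 1 - stdGr M M.length ≤ t) →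
      ∃ (M' : List ℤ) (_ : M <+: M'), StdParams M' ∧
        ∃ f' : V (M'.length + 1) →ₗ[R] V A.n,
          isAIMorphism (symCplx M') A f' ∧
          (∀ (i : ℕ) (hi : i < M.length + 1) (hi' : i < M'.length + 1),
            f' (e ⟨i, hi'⟩) = f (e ⟨i, hi⟩)) := by
  intro t
  induction t with
  | zero =>
    intro M hM f hf hbound
    -- forced stop : gradings exceed the bound
    have hstop : modU (omega A (f (e ⟨M.length, Nat.lt_succ_self _⟩))) := by
      have hx_h : IsHomog A.gr (stdGr M M.length)
          (f (e ⟨M.length, Nat.lt_succ_self _⟩)) := by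
        have h := hf.1 ⟨M.length, Nat.lt_succ_self _⟩
        have hg : (symCplx M).gr ⟨M.length, Nat.lt_succ_self _⟩ + 0 = stdGr M M.length := by
          show stdGr M M.length + 0 = stdGr M M.length
          rw [add_zero]
        rwa [hg] at h
      have hω_h : IsHomog A.gr (stdGr M M.length)
          (omega A (f (e ⟨M.length, Nat.lt_succ_self _⟩))) := by
        have := homog_map (omega_graded A hA) hx_h
        rwa [add_zero] at this
      have hzero : omega A (f (e ⟨M.length, Nat.lt_succ_self _⟩)) = 0 := by
        refine homog_forced_zero hω_h
          (G := ((Finset.univ.sup (fun j : Fin A.n => (A.gr j).toNat) : ℕ) : ℤ)) ?_ (by omega)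
        intro j
        calc A.gr j ≤ ((A.gr j).toNat : ℤ) := Int.self_le_toNat _
          _ ≤ _ := by
            exact_mod_cast Nat.cast_le.2
              (Finset.le_sup (f := fun j : Fin A.n => (A.gr j).toNat) (Finset.mem_univ j))
      rw [hzero]
      exact modU_zero
    exact ⟨M, List.prefix_refl M, hM, f, finish_stop A hA M hM f hf hstop,
      fun i hi hi' => rfl⟩
  | succ t ih =>
    intro M hM f hf hbound
    by_cases hstop : modU (omega A (f (e ⟨M.length, Nat.lt_succ_self _⟩)))
    · exact ⟨M, List.prefix_refl M, hM, f, finish_stop A hA M hM f hf hstop,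
        fun i hi hi' => rfl⟩
    · obtain ⟨f₂, hf₂, hagree, hgr2⟩ := extension_step A hA hred M hM f hf
      have hbound2 : (((Finset.univ.sup (fun j : Fin A.n => (A.gr j).toNat) : ℕ) : ℤ) + 1
          - stdGr (M ++ [-1, -1]) (M ++ [-1, -1]).length ≤ t) := by
        rw [hgr2]
        omega
      obtain ⟨M', hpre, hstd, f', hmor, hagr'⟩ :=
        ih (M ++ [-1, -1]) (stdParams_append M hM) f₂ hf₂ hbound2
      refine ⟨M', (List.prefix_append M [-1, -1]).trans hpre, hstd, f', hmor, ?_⟩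
      intro i hi hi'
      have hi2 : i < (M ++ [-1, -1]).length + 1 := by
        have : (M ++ [(-1 : ℤ), -1]).length = M.length + 2 := by simp
        omega
      rw [hagr' i hi2 hi', hagree i hi hi2]

theorem t9 : True := trivial

/-- extension lemma: a short map from a standard complex into a
reduced almost ι-complex extends to a genuine almost ι-morphism from a standard
complex whose parameter sequence extends the original one; it is local if
`f(T_0)` is a `U`-nontorsion homology class. -/
theorem extension_lemma (M : List ℤ) (hM : StdParams M)
    (A : PreAI) (hA : IsAICplx A) (hred : Reduced A)
    (f : V (M.length + 1) →ₗ[R] V A.n) (hf : isShortMap M A f) :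
    ∃ (M' : List ℤ) (hpre : M <+: M'), StdParams M' ∧
      ∃ f' : V (M'.length + 1) →ₗ[R] V A.n,
        isAIMorphism (symCplx M') A f' ∧
        (∀ i : ℕ, ∀ hi : i < M.length + 1,
          f' (e ⟨i, by have := hpre.length_le; omega⟩) = f (e ⟨i, hi⟩)) ∧
        (NontorsionClass A.toPreCplx (f (e ⟨0, Nat.succ_pos _⟩)) →
          isLocalMap (symCplx M') A f') := by
  obtain ⟨M', hpre, hstd, f', hmor, hagr⟩ :=
    extension_rec A hA hred
      ((((Finset.univ.sup (fun j : Fin A.n => (A.gr j).toNat) : ℕ) : ℤ) + 1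
        - stdGr M M.length).toNat)
      M hM f hf (Int.self_le_toNat _)
  refine ⟨M', hpre, hstd, f', hmor, ?_, ?_⟩
  · intro i hi
    exact hagr i hi _
  · intro hnt
    refine ⟨hmor, ?_⟩
    have h0 : f' (e ⟨0, Nat.succ_pos _⟩) = f (e ⟨0, Nat.succ_pos _⟩) :=
      hagr 0 (Nat.succ_pos _) (Nat.succ_pos _)
    exact std_local M' hstd A hA f' hmor.1 hmor.2.1 (by rw [h0]; exact hnt)

end AI
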